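/- Let u : ℝ → ℝ be four times continuously differentiable in a neighborhood of 0 with u(0) ≠ 0 and u''(0) ≠ 0. For h > 0 define the adaptive shape parameter s(h) = u''(h/2)/u(h/2). Then there exist C > 0 and h₀ > 0 such that for every 0 < h < h₀ and every pair λ₁, λ₂ ∈ ℝ satisfying λ₁ + λ₂·√(1 + s(h)·h²) = u(0) and λ₁·√(1 + s(h)·h²) + λ₂ = u(h), the interpolant I(x) = λ₁·√(1 + s(h)·x²) + λ₂·√(1 + s(h)·(x − h)²) satisfies |u(h/2) − I(h/2)| ≤ C·h⁴; i.e., the adaptively chosen shape parameter raises the two-point interpolation error at the midpoint from the polynomial order O(h²) to O(h⁴). -/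

import Mathlib

open Set Metric

lemma mvt0 {f f' : ℝ → ℝ} {T C : ℝ} (hf : ∀ t, HasDerivAt f (f' t) t) (h0 : f 0 = 0)
    (hb : ∀ t ∈ Icc (0:ℝ) T, |f' t| ≤ C) : ∀ t ∈ Icc (0:ℝ) T, |f t| ≤ C * t := by
  intro t ht
  have := norm_image_sub_le_of_norm_deriv_le_segment' (f := f) (f' := f') (a := 0) (b := T)
    (fun x hx => (hf x).hasDerivWithinAt) (fun x hx => hb x (Ico_subset_Icc_self hx)) t ht
  simpa [h0, Real.norm_eq_abs] using this

lemma taylorMid (g : ℝ → ℝ) (hg : ContDiff ℝ 4 g) (M : ℝ)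
    (hM : ∀ x ∈ Icc (-1:ℝ) 1, |iteratedDeriv 4 g x| ≤ M) :
    ∀ h ∈ Ioo (0:ℝ) 1,
      |g 0 + g h - 2 * g (h/2) - iteratedDeriv 2 g (h/2) * h^2/4| ≤ 2*M*h^4 := by
  have hM0 : 0 ≤ M := le_trans (abs_nonneg _) (hM 0 (by norm_num))
  -- derivative facts
  have hd : ∀ k : ℕ, k < 4 → ∀ x : ℝ,
      HasDerivAt (iteratedDeriv k g) (iteratedDeriv (k+1) g x) x := by
    intro k hk x
    have hdiff : DifferentiableAt ℝ (iteratedDeriv k g) x :=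
      (hg.differentiable_iteratedDeriv k (by exact_mod_cast hk)).differentiableAt
    have := hdiff.hasDerivAt
    rwa [show deriv (iteratedDeriv k g) x = iteratedDeriv (k+1) g x by
      rw [iteratedDeriv_succ]] at this
  intro h hh
  obtain ⟨hh0, hh1⟩ := hh
  set c := h/2 with hc
  set w := iteratedDeriv 2 g c with hw
  have hT0 : 0 ≤ c := by positivity
  -- inner derivative helpers
  have hp : ∀ k : ℕ, k < 4 → ∀ t : ℝ,
      HasDerivAt (fun t => iteratedDeriv k g (c+t)) (iteratedDeriv (k+1) g (c+t)) t := by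
    intro k hk t
    have := (hd k hk (c+t)).comp t (((hasDerivAt_id t).const_add c))
    simpa [Function.comp_def] using this
  have hm : ∀ k : ℕ, k < 4 → ∀ t : ℝ,
      HasDerivAt (fun t => iteratedDeriv k g (c-t)) (-(iteratedDeriv (k+1) g (c-t))) t := by
    intro k hk t
    have := (hd k hk (c-t)).comp t (((hasDerivAt_id t).neg.const_add c))
    simpa [mul_comm, Function.comp_def] using this
  -- the G functions
  set G3 : ℝ → ℝ := fun t => iteratedDeriv 3 g (c+t) - iteratedDeriv 3 g (c-t) with hG3
  set G2 : ℝ → ℝ := fun t => iteratedDeriv 2 g (c+t) + iteratedDeriv 2 g (c-t) - 2*w with hG2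
  set G1 : ℝ → ℝ := fun t => iteratedDeriv 1 g (c+t) - iteratedDeriv 1 g (c-t) - 2*w*t with hG1
  set G0 : ℝ → ℝ := fun t => g (c+t) + g (c-t) - 2*(g c) - w*t^2 with hG0
  have hrange : ∀ t ∈ Icc (0:ℝ) c, (c+t) ∈ Icc (-1:ℝ) 1 ∧ (c-t) ∈ Icc (-1:ℝ) 1 := by
    intro t ht
    obtain ⟨ht0, htT⟩ := ht
    constructor <;> constructor <;> simp only [hc] at * <;> linarith
  have b4 : ∀ t ∈ Icc (0:ℝ) c, |iteratedDeriv 4 g (c+t) + iteratedDeriv 4 g (c-t)| ≤ 2*M := by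
    intro t ht
    obtain ⟨h1, h2⟩ := hrange t ht
    calc |iteratedDeriv 4 g (c+t) + iteratedDeriv 4 g (c-t)|
        ≤ |iteratedDeriv 4 g (c+t)| + |iteratedDeriv 4 g (c-t)| := abs_add_le _ _
      _ ≤ M + M := add_le_add (hM _ h1) (hM _ h2)
      _ = 2*M := by ring
  have H3 : ∀ t, HasDerivAt G3 (iteratedDeriv 4 g (c+t) + iteratedDeriv 4 g (c-t)) t := by
    intro t
    have := (hp 3 (by norm_num) t).sub (hm 3 (by norm_num) t)
    simpa [hG3, sub_neg_eq_add, Pi.sub_def] using this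
  have b3 : ∀ t ∈ Icc (0:ℝ) c, |G3 t| ≤ (2*M) * t :=
    mvt0 H3 (by simp [hG3]) b4
  have b3' : ∀ t ∈ Icc (0:ℝ) c, |G3 t| ≤ 2*M*c := by
    intro t ht
    refine le_trans (b3 t ht) ?_
    have h2 : (0:ℝ) ≤ 2*M := by linarith
    nlinarith [mul_le_mul_of_nonneg_left ht.2 h2]
  have H2 : ∀ t, HasDerivAt G2 (G3 t) t := by
    intro t
    have := ((hp 2 (by norm_num) t).add (hm 2 (by norm_num) t)).sub_const (2*w)
    simpa [hG2, hG3, ← sub_eq_add_neg] using this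
  have b2 : ∀ t ∈ Icc (0:ℝ) c, |G2 t| ≤ (2*M*c) * t :=
    mvt0 H2 (by simp [hG2, hw]; ring) b3'
  have b2' : ∀ t ∈ Icc (0:ℝ) c, |G2 t| ≤ 2*M*c^2 := by
    intro t ht
    refine le_trans (b2 t ht) ?_
    have h2 : (0:ℝ) ≤ 2*M*c := by positivity
    nlinarith [mul_le_mul_of_nonneg_left ht.2 h2]
  have H1 : ∀ t, HasDerivAt G1 (G2 t) t := by
    intro t
    have h2w : HasDerivAt (fun t : ℝ => 2*w*t) (2*w) t := by
      simpa using (hasDerivAt_id t).const_mul (2*w)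
    have := ((hp 1 (by norm_num) t).sub (hm 1 (by norm_num) t)).sub h2w
    simpa [hG1, hG2, sub_neg_eq_add, Pi.sub_def] using this
  have b1 : ∀ t ∈ Icc (0:ℝ) c, |G1 t| ≤ (2*M*c^2) * t :=
    mvt0 H1 (by simp [hG1]) b2'
  have b1' : ∀ t ∈ Icc (0:ℝ) c, |G1 t| ≤ 2*M*c^3 := by
    intro t ht
    refine le_trans (b1 t ht) ?_
    have h2 : (0:ℝ) ≤ 2*M*c^2 := by positivity
    nlinarith [mul_le_mul_of_nonneg_left ht.2 h2]
  have H0 : ∀ t, HasDerivAt G0 (G1 t) t := by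
    intro t
    have hpg : HasDerivAt (fun t => g (c+t)) (iteratedDeriv 1 g (c+t)) t := by
      have := hp 0 (by norm_num) t; simpa [iteratedDeriv_zero] using this
    have hmg : HasDerivAt (fun t => g (c-t)) (-(iteratedDeriv 1 g (c-t))) t := by
      have := hm 0 (by norm_num) t; simpa [iteratedDeriv_zero] using this
    have hwt : HasDerivAt (fun t : ℝ => w*t^2) (2*w*t) t := by
      have := (hasDerivAt_pow 2 t).const_mul w
      simpa [mul_comm, mul_assoc, mul_left_comm] using this
    have := ((hpg.add hmg).sub_const (2*(g c))).sub hwt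
    simpa [hG0, hG1, sub_neg_eq_add, Pi.sub_def, ← sub_eq_add_neg] using this
  have b0 : ∀ t ∈ Icc (0:ℝ) c, |G0 t| ≤ (2*M*c^3) * t :=
    mvt0 H0 (by simp [hG0]; ring) b1'
  have hfin := b0 c ⟨hT0, le_rfl⟩
  have e1 : c + c = h := by rw [hc]; ring
  have e2 : c - c = 0 := by ring
  have heq : G0 c = g 0 + g h - 2 * g c - w * h^2/4 := by
    show g (c+c) + g (c-c) - 2*(g c) - w*c^2 = _
    rw [e1, e2, hc]; ring
  rw [heq] at hfin
  refine le_trans hfin ?_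
  rw [hc]
  nlinarith [mul_nonneg hM0 (pow_nonneg hh0.le 4)]

lemma sqrt_lin (x : ℝ) (hx : |x| ≤ 1/2) : |Real.sqrt (1+x) - (1 + x/2)| ≤ x^2 := by
  have h1 : (0:ℝ) ≤ 1 + x := by cases abs_le.1 hx; linarith
  have hr := Real.sq_sqrt h1
  have hr0 := Real.sqrt_nonneg (1+x)
  set r := Real.sqrt (1+x) with hrdef
  rw [abs_le]
  constructor <;> nlinarith [abs_le.1 hx, sq_nonneg (r - 1), sq_nonneg x]

lemma abs4 (a b c d : ℝ) : |a - b - c - d| ≤ |a| + |b| + |c| + |d| := by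
  calc |a - b - c - d| ≤ |a - b - c| + |d| := abs_sub _ _
    _ ≤ (|a - b| + |c|) + |d| := by linarith [abs_sub (a-b) c]
    _ ≤ ((|a| + |b|) + |c|) + |d| := by linarith [abs_sub a b]
    _ = |a| + |b| + |c| + |d| := by ring

set_option maxHeartbeats 1000000 in
/-- The adaptively chosen shape parameter `s(h) = u''(h/2)/u(h/2)` raises the
two-point MQ interpolation error at the midpoint to fourth order. -/
theorem stmt_2 (u : ℝ → ℝ) (hu : ContDiffAt ℝ 4 u 0)
    (hu0 : u 0 ≠ 0) (hu2 : iteratedDeriv 2 u 0 ≠ 0) :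
    ∃ C > 0, ∃ h₀ > 0, ∀ h : ℝ, 0 < h → h < h₀ →
      ∀ l1 l2 : ℝ,
        l1 + l2 * Real.sqrt (1 + iteratedDeriv 2 u (h / 2) / u (h / 2) * h ^ 2) = u 0 →
        l1 * Real.sqrt (1 + iteratedDeriv 2 u (h / 2) / u (h / 2) * h ^ 2) + l2 = u h →
        |u (h / 2)
            - (l1 * Real.sqrt (1 + iteratedDeriv 2 u (h / 2) / u (h / 2) * (h / 2) ^ 2)
              + l2 * Real.sqrt (1 + iteratedDeriv 2 u (h / 2) / u (h / 2) * (h / 2 - h) ^ 2))|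
          ≤ C * h ^ 4 := by
  -- Step 1: extend u to a globally C⁴ function g agreeing with u near 0
  obtain ⟨U, hU_nhds, hUs⟩ := hu.contDiffOn (le_refl 4) (by simp)
  obtain ⟨r, hr0, hrsub⟩ := Metric.mem_nhds_iff.1 hU_nhds
  set φ : ContDiffBump (0:ℝ) := ⟨r/2, 3*r/4, by positivity, by linarith⟩ with hφ
  set g : ℝ → ℝ := fun x => φ x * u x with hgdef
  have hgu : ∀ x ∈ ball (0:ℝ) (r/2), g x = u x := by
    intro x hx
    have h1 : φ x = 1 := φ.one_of_mem_closedBall (ball_subset_closedBall hx)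
    simp [hgdef, h1]
  have hg : ContDiff ℝ 4 g := by
    rw [contDiff_iff_contDiffAt]
    intro x
    by_cases hx : x ∈ ball (0:ℝ) r
    · exact (φ.contDiffAt).mul (hUs.contDiffAt
        (mem_nhds_iff.mpr ⟨ball 0 r, hrsub, isOpen_ball, hx⟩))
    · have hxd : r ≤ dist x 0 := by simpa [mem_ball, not_lt] using hx
      have hev : ∀ᶠ y in nhds x, g y = 0 := by
        have hopen : IsOpen {y : ℝ | 3*r/4 < dist y 0} :=
          isOpen_lt continuous_const (continuous_id.dist continuous_const)
        have hxin : x ∈ {y : ℝ | 3*r/4 < dist y 0} := by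
          simp only [mem_setOf_eq]; linarith
        filter_upwards [hopen.mem_nhds hxin] with y hy
        have hy0 : φ y = 0 := φ.zero_of_le_dist (le_of_lt hy)
        simp [hgdef, hy0]
      exact contDiffAt_const.congr_of_eventuallyEq hev
  have hIter := Set.EqOn.iteratedDeriv_of_isOpen (f := g) (g := u)
      (fun x hx => hgu x hx) isOpen_ball 2
  have hg0 : g 0 = u 0 := hgu 0 (by simp [mem_ball]; positivity)
  clear_value g
  clear hgdef hφ φ hu hUs hU_nhds hrsub hu2
  -- Step 2: constants
  have habs0 : 0 < |u 0| := abs_pos.mpr hu0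
  set ε : ℝ := |u 0| / 2 with hε
  have hε0 : 0 < ε := by rw [hε]; linarith
  have h2ε : ε < |g 0| := by rw [hg0, hε]; linarith
  clear_value ε
  have hev : ∀ᶠ x in nhds (0:ℝ), ε < |g x| := by
    have hc : Filter.Tendsto (fun x => |g x|) (nhds 0) (nhds |g 0|) :=
      (hg.continuous.abs.continuousAt)
    exact hc.eventually_const_lt h2ε
  obtain ⟨δ₁, hδ₁0, hδ₁⟩ := Metric.eventually_nhds_iff.1 hev
  obtain ⟨K₁, hK₁⟩ := isCompact_Icc.exists_bound_of_continuousOn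
      (f := g) (s := Icc (-1:ℝ) 1) hg.continuous.continuousOn
  obtain ⟨K₂, hK₂⟩ := isCompact_Icc.exists_bound_of_continuousOn
      (f := iteratedDeriv 2 g) (s := Icc (-1:ℝ) 1)
      ((hg.continuous_iteratedDeriv 2 (by norm_num)).continuousOn)
  obtain ⟨M, hM⟩ := isCompact_Icc.exists_bound_of_continuousOn
      (f := iteratedDeriv 4 g) (s := Icc (-1:ℝ) 1)
      ((hg.continuous_iteratedDeriv 4 (by norm_num)).continuousOn)
  set K : ℝ := max K₁ K₂ with hKdef
  have hKg : ∀ x ∈ Icc (-1:ℝ) 1, |g x| ≤ K := fun x hx =>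
    le_trans (by simpa using hK₁ x hx) (le_max_left _ _)
  have hKd : ∀ x ∈ Icc (-1:ℝ) 1, |iteratedDeriv 2 g x| ≤ K := fun x hx =>
    le_trans (by simpa using hK₂ x hx) (le_max_right _ _)
  have hMa : ∀ x ∈ Icc (-1:ℝ) 1, |iteratedDeriv 4 g x| ≤ M := fun x hx => by
    simpa using hM x hx
  have hK0 : 0 ≤ K := le_trans (abs_nonneg _) (hKg 0 (by norm_num))
  clear_value K
  have hM0 : 0 ≤ M := le_trans (abs_nonneg _) (hMa 0 (by norm_num))
  set S : ℝ := K / ε with hSdef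
  have hS0 : 0 ≤ S := div_nonneg hK0 hε0.le
  clear_value S
  set C : ℝ := K*S^2 + 2*M + (K/4+2*M)*S + 2*K*S^2 + 1 with hCdef
  clear_value C
  have hC0 : 0 < C := by
    have p1 : 0 ≤ K*S^2 := mul_nonneg hK0 (sq_nonneg _)
    have p2 : 0 ≤ (K/4+2*M)*S := mul_nonneg (by linarith) hS0
    rw [hCdef]; linarith
  set h₀ : ℝ := min (min (r/2) δ₁) (min 1 (1/(2*(S+1)))) with hh₀def
  clear_value h₀
  have hh₀0 : 0 < h₀ := by
    have hx : (0:ℝ) < 1/(2*(S+1)) := by positivity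
    rw [hh₀def]
    simp only [lt_min_iff]
    exact ⟨⟨by positivity, hδ₁0⟩, ⟨by norm_num, hx⟩⟩
  refine ⟨C, hC0, h₀, hh₀0, ?_⟩
  intro h hhp hhh l1 l2 hc1 hc2
  rw [hh₀def] at hhh
  have hhr : h < r/2 := lt_of_lt_of_le hhh (le_trans (min_le_left _ _) (min_le_left _ _))
  have hhδ : h < δ₁ := lt_of_lt_of_le hhh (le_trans (min_le_left _ _) (min_le_right _ _))
  have hh1 : h < 1 := lt_of_lt_of_le hhh (le_trans (min_le_right _ _) (min_le_left _ _))
  have hhS : h ≤ 1/(2*(S+1)) := le_of_lt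
    (lt_of_lt_of_le hhh (le_trans (min_le_right _ _) (min_le_right _ _)))
  -- transfer u-values to g-values
  have hmem : ∀ y : ℝ, 0 ≤ y → y ≤ h → y ∈ ball (0:ℝ) (r/2) := by
    intro y h1 h2
    simp only [mem_ball, Real.dist_eq, sub_zero]
    rw [abs_of_nonneg h1]; linarith only [h2, hhr]
  have e0 : u 0 = g 0 := hg0.symm
  have eh : u h = g h := (hgu h (hmem h hhp.le le_rfl)).symm
  have em : u (h/2) = g (h/2) :=
    (hgu _ (hmem (h/2) (by linarith only [hhp]) (by linarith only [hhp]))).symm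
  have ed : iteratedDeriv 2 u (h/2) = iteratedDeriv 2 g (h/2) :=
    (hIter (hmem (h/2) (by linarith only [hhp]) (by linarith only [hhp]))).symm
  rw [em, ed] at hc1 hc2 ⊢
  rw [e0] at hc1
  rw [eh] at hc2
  -- abbreviations
  set v : ℝ := g (h/2) with hvdef
  set w : ℝ := iteratedDeriv 2 g (h/2) with hwdef
  clear_value v w
  have hvmem : (h/2) ∈ Icc (-1:ℝ) 1 := by
    constructor <;> linarith only [hhp, hh1]
  have hεv : ε < |v| := by
    rw [hvdef]
    apply hδ₁
    simp only [Real.dist_eq, sub_zero]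
    rw [abs_of_nonneg (by linarith only [hhp] : (0:ℝ) ≤ h/2)]
    linarith only [hhδ, hhp]
  have hv0 : v ≠ 0 := by
    intro hv
    rw [hv, abs_zero] at hεv; linarith only [hεv, hε0]
  have hvK : |v| ≤ K := by rw [hvdef]; exact hKg _ hvmem
  have hwK : |w| ≤ K := by rw [hwdef]; exact hKd _ hvmem
  have hsS : |w/v| ≤ S := by
    rw [abs_div, hSdef]
    exact div_le_div₀ hK0 hwK hε0 hεv.le
  have hg0K : |g 0| ≤ K := hKg 0 (by norm_num)
  have hghK : |g h| ≤ K := hKg h ⟨by linarith only [hhp], by linarith only [hh1]⟩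
  have hsumK : |g 0 + g h| ≤ 2*K :=
    le_trans (abs_add_le _ _) (by linarith only [hg0K, hghK])
  have hA : |g 0 + g h - 2*v - w*h^2/4| ≤ 2*M*h^4 := by
    have := taylorMid g hg M hMa h ⟨hhp, hh1⟩
    rw [← hvdef, ← hwdef] at this
    exact this
  clear hg hMa hKg hKd hδ₁ hgu hIter hmem e0 eh em ed hev hK₁ hK₂ hM hεv
  clear hvmem habs0 h2ε hδ₁0 hε0 hhδ hhr hr0
  -- smallness of the sqrt arguments
  have hh2sub : 0 ≤ h - h^2 := by nlinarith only [hhp, hh1]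
  have hh2S : h * (2*(S+1)) ≤ 1 := (le_div_iff₀ (by positivity)).mp hhS
  have hShsq : S * h^2 ≤ 1/2 := by
    nlinarith only [mul_nonneg hS0 hh2sub, hh2S, hS0, hhp.le]
  have hx1a : |w/v * h^2| ≤ S * h^2 := by
    rw [abs_mul, abs_of_nonneg (sq_nonneg h)]
    exact mul_le_mul_of_nonneg_right hsS (sq_nonneg h)
  have hx1 : |w/v * h^2| ≤ 1/2 := le_trans hx1a hShsq
  have hx2a : |w/v * (h/2)^2| ≤ S * h^2 := by
    rw [abs_mul]
    have hq2 : |(h/2)^2| ≤ h^2 := by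
      rw [abs_of_nonneg (sq_nonneg _)]; nlinarith
    exact mul_le_mul hsS hq2 (abs_nonneg _) hS0
  have hx2 : |w/v * (h/2)^2| ≤ 1/2 := le_trans hx2a hShsq
  have hx1sq : (w/v * h^2)^2 ≤ S^2*h^4 := by
    have a1 := (abs_le.1 hx1a).1
    have a2 := (abs_le.1 hx1a).2
    nlinarith only [a1, a2, mul_nonneg (sub_nonneg.2 a2) (by linarith only [a1] : 0 ≤ w/v*h^2 + S*h^2)]
  have hx2sq : (w/v * (h/2)^2)^2 ≤ S^2*h^4 := by
    have a1 := (abs_le.1 hx2a).1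
    have a2 := (abs_le.1 hx2a).2
    nlinarith only [a1, a2, mul_nonneg (sub_nonneg.2 a2) (by linarith only [a1] : 0 ≤ w/v*(h/2)^2 + S*h^2)]
  -- goal normalization
  have hsqr : ((h:ℝ)/2 - h)^2 = (h/2)^2 := by ring
  rw [hsqr]
  set R : ℝ := Real.sqrt (1 + w/v * h^2) with hRdef
  set q : ℝ := Real.sqrt (1 + w/v * (h/2)^2) with hqdef
  clear_value R q
  have hR0 : 0 ≤ R := hRdef ▸ Real.sqrt_nonneg _
  have h1R : (0:ℝ) < 1 + R := by linarith only [hR0]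
  have hsum : (l1+l2)*(1+R) = g 0 + g h := by linear_combination hc1 + hc2
  -- sqrt expansions
  have hE1 : |R - (1 + w/v*h^2/2)| ≤ (w/v * h^2)^2 := by
    have hs := sqrt_lin (w/v * h^2) hx1
    rw [← hRdef] at hs
    exact hs
  have hE2 : |q - (1 + w/v*(h/2)^2/2)| ≤ (w/v * (h/2)^2)^2 := by
    have hs := sqrt_lin (w/v * (h/2)^2) hx2
    rw [← hqdef] at hs
    exact hs
  -- algebra
  have hvs : v * (w/v) = w := by field_simp
  have hlin : v - (l1*q + l2*q) = (v*(1+R) - (g 0 + g h)*q)/(1+R) := by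
    rw [eq_div_iff (ne_of_gt h1R)]
    linear_combination (-q) * hsum
  have hident : v*(1+R) - (g 0 + g h)*q
      = v*(R - (1 + w/v*h^2/2))
        - (g 0 + g h - 2*v - w*h^2/4)
        - (w*h^2/4 + (g 0 + g h - 2*v - w*h^2/4))*((w/v)*h^2/8)
        - (g 0 + g h)*(q - (1 + w/v*(h/2)^2/2)) := by
    linear_combination (h^2/4) * hvs
  -- term bounds
  have t1 : |v*(R - (1 + w/v*h^2/2))| ≤ K*(S^2*h^4) := by
    rw [abs_mul]
    exact mul_le_mul hvK (le_trans hE1 hx1sq) (abs_nonneg _) hK0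
  have t2 := hA
  have t4 : |(g 0 + g h)*(q - (1 + w/v*(h/2)^2/2))| ≤ (2*K)*(S^2*h^4) := by
    rw [abs_mul]
    exact mul_le_mul hsumK (le_trans hE2 hx2sq) (abs_nonneg _) (by linarith only [hK0])
  have t3 : |(w*h^2/4 + (g 0 + g h - 2*v - w*h^2/4))*((w/v)*h^2/8)| ≤ ((K/4+2*M)*S)*h^4 := by
    rw [abs_mul]
    have hb1 : |w*h^2/4 + (g 0 + g h - 2*v - w*h^2/4)| ≤ (K/4+2*M)*h^2 := by
      refine le_trans (abs_add_le _ _) ?_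
      have hw4 : |w*h^2/4| ≤ K*h^2/4 := by
        rw [abs_div, abs_mul, abs_of_nonneg (sq_nonneg h)]
        have : |w| * h^2 ≤ K * h^2 := mul_le_mul_of_nonneg_right hwK (sq_nonneg h)
        rw [abs_of_nonneg (by norm_num : (0:ℝ) ≤ 4)]
        linarith
      have h21 : h^2 ≤ 1 := by nlinarith only [hhp, hh1]
      have h42 : h^4 ≤ h^2 := by
        calc h^4 = h^2*h^2 := by ring
          _ ≤ h^2*1 := mul_le_mul_of_nonneg_left h21 (sq_nonneg h)
          _ = h^2 := by ring
      have hA2 : |g 0 + g h - 2*v - w*h^2/4| ≤ 2*M*h^2 := by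
        refine le_trans hA ?_
        exact mul_le_mul_of_nonneg_left h42 (by linarith only [hM0] : (0:ℝ) ≤ 2*M)
      refine le_trans (add_le_add hw4 hA2) (le_of_eq (by ring))
    have hb2 : |(w/v)*h^2/8| ≤ S*h^2 := by
      rw [abs_div]
      rw [abs_of_nonneg (by norm_num : (0:ℝ) ≤ 8)]
      linarith only [hx1a, abs_nonneg (w/v * h^2)]
    calc |w*h^2/4 + (g 0 + g h - 2*v - w*h^2/4)| * |(w/v)*h^2/8|
        ≤ ((K/4+2*M)*h^2) * (S*h^2) := by
          refine mul_le_mul hb1 hb2 (abs_nonneg _) ?_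
          have : (0:ℝ) ≤ (K/4+2*M) := by linarith only [hK0, hM0]
          exact mul_nonneg this (sq_nonneg h)
      _ = ((K/4+2*M)*S)*h^4 := by ring
  -- assemble
  rw [hlin, abs_div, abs_of_pos h1R]
  have hDb : |v*(1+R) - (g 0 + g h)*q| ≤ C*h^4 := by
    rw [hident]
    refine le_trans (abs4 _ _ _ _) ?_
    have hp4 : 0 ≤ h^4 := by positivity
    rw [hCdef]
    linarith only [t1, t2, t3, t4, hp4]
  calc |v*(1+R) - (g 0 + g h)*q| / (1+R)
      ≤ |v*(1+R) - (g 0 + g h)*q| := div_le_self (abs_nonneg _) (by linarith only [hR0])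
    _ ≤ C*h^4 := hDb
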